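/- Let G = (V,E) be a finite simple graph and S ⊆ V such that G∖S is bipartite and the contraction G/S is non-bipartite with odd girth 2ρ−1 (ρ ≥ 2 an integer). Let w : V → ℝ≥0 with w(V) = 2 admit a dual certificate y, and set α := y(E[S]), where E[S] is the set of edges of G with both endpoints in S. Then w(S) + OPT(G∖S, w) ≤ ((1 + 1/ρ)(1 − α) + 2α) · OPT(G, w). -/

import Mathlib

open Finset

/-- `C` is a vertex cover of `G`. -/
def IsVC {V : Type*} (G : SimpleGraph V) (C : Finset V) : Prop :=
  ∀ ⦃u v : V⦄, G.Adj u v → u ∈ C ∨ v ∈ C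

/-- `OPT G w` : minimum weight of a vertex cover of `G`. -/
noncomputable def OPT {V : Type*} [Fintype V] (G : SimpleGraph V) (w : V → ℝ) : ℝ :=
  sInf {t : ℝ | ∃ C : Finset V, IsVC G C ∧ t = ∑ v ∈ C, w v}

/-- `LPval G w` : optimal value of the standard vertex cover LP relaxation. -/
noncomputable def LPval {V : Type*} [Fintype V] (G : SimpleGraph V) (w : V → ℝ) : ℝ :=
  sInf {t : ℝ | ∃ x : V → ℝ, (∀ v, 0 ≤ x v) ∧ (∀ ⦃u v : V⦄, G.Adj u v → 1 ≤ x u + x v) ∧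
    t = ∑ v, w v * x v}

/-- The graph `G ∖ S` (vertices of `S` kept as isolated vertices). -/
def Gdel {V : Type*} (G : SimpleGraph V) (S : Set V) : SimpleGraph V :=
  SimpleGraph.fromRel (fun u v => G.Adj u v ∧ u ∉ S ∧ v ∉ S)

open scoped Classical in
/-- Sum of `y` over the set of edges described by `P`. -/
noncomputable def ysum {V : Type*} [Fintype V] [DecidableEq V]
    (y : Sym2 V → ℝ) (P : Sym2 V → Prop) : ℝ :=
  ∑ e : Sym2 V, if P e then y e else 0

/-- `y` is a dual certificate for `w` : a feasible dual solution with `y(δ(v)) = w v`. -/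
def IsDualCert {V : Type*} [Fintype V] [DecidableEq V] (G : SimpleGraph V)
    (w : V → ℝ) (y : Sym2 V → ℝ) : Prop :=
  (∀ e, 0 ≤ y e) ∧ (∀ e, e ∉ G.edgeSet → y e = 0) ∧
    ∀ v : V, ysum y (fun e => e ∈ G.edgeSet ∧ v ∈ e) = w v

/-- Membership in the polytope `Q^W`. -/
def memQW {V : Type*} [Fintype V] [DecidableEq V] (G : SimpleGraph V) (w : V → ℝ) : Prop :=
  (∀ v, 0 ≤ w v) ∧ (∑ v, w v) = 2 ∧ ∃ y : Sym2 V → ℝ, IsDualCert G w y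

/-- `G` has odd girth `n` : it contains an odd cycle of length `n` and no shorter one. -/
def HasOddGirth {V : Type*} (G : SimpleGraph V) (n : ℕ) : Prop :=
  Odd n ∧ (∃ (v : V) (c : G.Walk v v), c.IsCycle ∧ c.length = n) ∧
    ∀ (v : V) (c : G.Walk v v), c.IsCycle → Odd c.length → n ≤ c.length

/-- The contraction `G / S` of the vertex set `S` to a single new vertex `none`. -/
def contract {V : Type*} (G : SimpleGraph V) (S : Set V) :
    SimpleGraph (Option {v : V // v ∉ S}) :=
  SimpleGraph.fromRel (fun x y =>
    match x, y with
    | some u, some v => G.Adj u.1 v.1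
    | some u, none => ∃ s ∈ S, G.Adj u.1 s
    | none, _ => False)

/-- `I` is an independent set of `G`. -/
def IsIndep {V : Type*} (G : SimpleGraph V) (I : Finset V) : Prop :=
  ∀ ⦃u⦄, u ∈ I → ∀ ⦃v⦄, v ∈ I → ¬ G.Adj u v

/-- The fractional chromatic number of `G`. -/
noncomputable def fracChrom {V : Type*} [Fintype V] [DecidableEq V] (G : SimpleGraph V) : ℝ :=
  sInf {t : ℝ | ∃ y : Finset V → ℝ, (∀ I, 0 ≤ y I) ∧ (∀ I, ¬ IsIndep G I → y I = 0) ∧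
    (∀ v : V, 1 ≤ ∑ I : Finset V, if v ∈ I then y I else 0) ∧ t = ∑ I : Finset V, y I}



namespace RB

/-- From an odd closed walk one can extract an odd cycle of no greater length. -/
theorem exists_odd_cycle (n : ℕ) {V : Type*} [DecidableEq V] {H : SimpleGraph V} :
    ∀ {x : V} (p : H.Walk x x), p.length ≤ n → Odd p.length →
      ∃ (z : V) (c : H.Walk z z), c.IsCycle ∧ Odd c.length ∧ c.length ≤ p.length := by
  induction n using Nat.strong_induction_on with
  | _ n IH =>
    intro x p hlen hodd
    by_cases hnd : p.support.tail.Nodup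
    · -- p itself is a cycle
      cases p with
      | nil => simp at hodd
      | @cons _ y _ h q =>
        have hq : q.support.Nodup := by simpa using hnd
        have hne : ¬ s(x, y) ∈ q.edges := by
          intro hmem
          cases q with
          | nil => exact (H.irrefl h)
          | @cons _ z _ h' q' =>
            simp only [SimpleGraph.Walk.edges_cons, List.mem_cons] at hmem
            rcases hmem with heq | hmem'
            · have hxz : x = z := by
                rcases Sym2.eq_iff.mp heq with ⟨hxy, -⟩ | ⟨hxz, -⟩
                · exact absurd hxy h.ne
                · exact hxz
              subst hxz
              cases q' with
              | nil =>
                rw [Nat.odd_iff] at hodd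
                simp [SimpleGraph.Walk.length_cons] at hodd
              | @cons _ u _ h'' q'' =>
                have hxend : x ∈ q''.support := q''.end_mem_support
                simp only [SimpleGraph.Walk.support_cons, List.nodup_cons, List.mem_cons] at hq
                exact hq.2.1 hxend
            · have hy : y ∈ q'.support := q'.snd_mem_support_of_mem_edges hmem'
              simp only [SimpleGraph.Walk.support_cons, List.nodup_cons, List.mem_cons] at hq
              exact hq.1 hy
        have hcyc : (SimpleGraph.Walk.cons h q).IsCycle :=
          (SimpleGraph.Walk.cons_isCycle_iff q h).mpr ⟨SimpleGraph.Walk.IsPath.mk' hq, hne⟩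
        exact ⟨x, _, hcyc, hodd, le_rfl⟩
    · -- there is a repeated vertex; rotate and split
      obtain ⟨y, hdup⟩ := List.exists_duplicate_iff_not_nodup.mpr hnd
      have hymem : y ∈ p.support := List.mem_of_mem_tail hdup.mem
      have hcount : 2 ≤ p.support.tail.count y := List.duplicate_iff_two_le_count.mp hdup
      obtain ⟨r0, hlenr0, hcountr0⟩ : ∃ r0 : H.Walk y y,
          r0.length = p.length ∧ 2 ≤ r0.support.tail.count y := by
        refine ⟨p.rotate y hymem, ?_, ?_⟩
        · have h1 := congr_arg SimpleGraph.Walk.length (p.take_spec hymem)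
          rw [SimpleGraph.Walk.length_append] at h1
          unfold SimpleGraph.Walk.rotate
          rw [SimpleGraph.Walk.length_append]
          omega
        · have hrot := p.support_rotate y hymem
          rwa [hrot.perm.count_eq]
      rw [← hlenr0] at hodd hlen ⊢
      cases r0 with
      | nil => simp at hcountr0
      | @cons _ z _ h q =>
        simp only [SimpleGraph.Walk.support_cons, List.tail_cons] at hcountr0
        have hyq : y ∈ q.support := by
          by_contra hc
          rw [List.count_eq_zero_of_not_mem hc] at hcountr0
          omega
        have hts := congr_arg SimpleGraph.Walk.length (q.take_spec hyq)
        rw [SimpleGraph.Walk.length_append] at hts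
        have hc2pos : 1 ≤ (q.dropUntil y hyq).length := by
          cases hc2' : q.dropUntil y hyq with
          | nil =>
            exfalso
            have hqeq := q.take_spec hyq
            rw [hc2'] at hqeq
            have hcnt : q.support.count y = (q.takeUntil y hyq).support.count y := by
              conv_lhs => rw [← hqeq]
              rw [SimpleGraph.Walk.support_append]
              simp
            rw [q.count_support_takeUntil_eq_one hyq] at hcnt
            omega
          | cons h2 q2 => rw [SimpleGraph.Walk.length_cons]; omega
        have hlq : (SimpleGraph.Walk.cons h (q.takeUntil y hyq)).length
            + (q.dropUntil y hyq).length = (SimpleGraph.Walk.cons h q).length := by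
          rw [SimpleGraph.Walk.length_cons, SimpleGraph.Walk.length_cons]
          omega
        rcases Nat.even_or_odd (SimpleGraph.Walk.cons h (q.takeUntil y hyq)).length with he1 | ho1
        · have ho2 : Odd (q.dropUntil y hyq).length := by
            rcases Nat.even_or_odd (q.dropUntil y hyq).length with he2 | ho2
            · exfalso; rw [← hlq] at hodd
              rcases hodd with ⟨k, hk⟩; rcases he1 with ⟨a, ha⟩; rcases he2 with ⟨b, hb⟩; omega
            · exact ho2
          obtain ⟨z', c', hc', ho', hl'⟩ :=
            IH (q.dropUntil y hyq).length (by rw [SimpleGraph.Walk.length_cons] at hlq hlen; omega)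
              (q.dropUntil y hyq) le_rfl ho2
          exact ⟨z', c', hc', ho', by omega⟩
        · obtain ⟨z', c', hc', ho', hl'⟩ :=
            IH (SimpleGraph.Walk.cons h (q.takeUntil y hyq)).length (by omega)
              (SimpleGraph.Walk.cons h (q.takeUntil y hyq)) le_rfl ho1
          exact ⟨z', c', hc', ho', by omega⟩

end RB


namespace RB

open scoped Classical

variable {V : Type*} [Fintype V] [DecidableEq V]

/-- Sum of a vertex function over the two endpoints of an edge. -/
noncomputable def esum (f : V → ℝ) : Sym2 V → ℝ :=
  Sym2.lift ⟨fun a b => f a + f b, fun a b => by ring⟩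

@[simp] lemma esum_mk (f : V → ℝ) (a b : V) : esum f s(a, b) = f a + f b := rfl

lemma masterW (G : SimpleGraph V) (w : V → ℝ) (y : Sym2 V → ℝ)
    (hdc : IsDualCert G w y) (f : V → ℝ) :
    ∑ v, f v * w v = ∑ e : Sym2 V, y e * esum f e := by
  have hw : ∀ v, w v = ysum y (fun e => e ∈ G.edgeSet ∧ v ∈ e) := fun v => (hdc.2.2 v).symm
  have step1 : ∑ v, f v * w v
      = ∑ v, ∑ e : Sym2 V, (if e ∈ G.edgeSet ∧ v ∈ e then f v * y e else 0) := by
    refine Finset.sum_congr rfl fun v _ => ?_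
    rw [hw v, ysum, Finset.mul_sum]
    refine Finset.sum_congr rfl fun e _ => ?_
    split_ifs <;> simp
  rw [step1, Finset.sum_comm]
  refine Finset.sum_congr rfl fun e _ => ?_
  by_cases he : e ∈ G.edgeSet
  · have hnd : ¬ e.IsDiag := G.not_isDiag_of_mem_edgeSet he
    induction e using Sym2.ind with
    | _ a b =>
      have hab : a ≠ b := by simpa [Sym2.mk_isDiag_iff] using hnd
      have : ∀ v : V, (if s(a,b) ∈ G.edgeSet ∧ v ∈ s(a,b) then f v * y s(a,b) else 0)
          = (if v = a ∨ v = b then f v * y s(a,b) else 0) := by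
        intro v
        simp only [he, true_and, Sym2.mem_iff]
      rw [Finset.sum_congr rfl (fun v _ => this v)]
      rw [← Finset.sum_filter]
      have hset : Finset.univ.filter (fun v => v = a ∨ v = b) = {a, b} := by
        ext v; simp [Finset.mem_insert]
      rw [hset, Finset.sum_pair hab, esum_mk]
      ring
  · have hy : y e = 0 := hdc.2.1 e he
    simp [hy, he]

/-- The `φ` thresholds of the `r` candidate independent sets. -/
def phiN (r k : ℕ) : ℕ := if r % 2 = 1 ∧ k = r - 1 then r else 2 * (k / 2) + 1

/-- The `k`-th candidate independent set. -/
noncomputable def Ncand (S I : Finset V) (col : V → Fin 2) (d : V → ℕ∞) (r k : ℕ) : Finset V :=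
  Finset.univ.filter (fun v => v ∉ S ∧
    (((∃ s : ℕ, d v = ((2 * s + 1 : ℕ) : ℕ∞)) ∧ d v < ((phiN r k : ℕ) : ℕ∞)) ∨
      (((phiN r k : ℕ) : ℕ∞) ≤ d v ∧
        (if r % 2 = 1 ∧ k = r - 1 then v ∈ I else ((col v : ℕ) = k % 2)))))

lemma mem_Ncand {S I : Finset V} {col : V → Fin 2} {d : V → ℕ∞} {r k : ℕ} {v : V} :
    v ∈ Ncand S I col d r k ↔ v ∉ S ∧
    (((∃ s : ℕ, d v = ((2 * s + 1 : ℕ) : ℕ∞)) ∧ d v < ((phiN r k : ℕ) : ℕ∞)) ∨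
      (((phiN r k : ℕ) : ℕ∞) ≤ d v ∧
        (if r % 2 = 1 ∧ k = r - 1 then v ∈ I else ((col v : ℕ) = k % 2)))) := by
  simp [Ncand]

/-- frequency of a vertex among the candidates -/
noncomputable def freq (S I : Finset V) (col : V → Fin 2) (d : V → ℕ∞) (r : ℕ) (v : V) : ℕ :=
  ((Finset.range r).filter (fun k => v ∈ Ncand S I col d r k)).card

lemma card_filter_ge {r k0 : ℕ} {P : ℕ → Prop} [DecidablePred P] (h : ∀ k, k < r → k ≠ k0 → P k) :
    r - 1 ≤ ((Finset.range r).filter (fun k => P k)).card := by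
  have hsub : (Finset.range r).erase k0 ⊆ (Finset.range r).filter (fun k => P k) := by
    intro k hk
    rw [Finset.mem_erase] at hk
    rw [Finset.mem_filter]
    exact ⟨hk.2, h k (Finset.mem_range.mp hk.2) hk.1⟩
  calc r - 1 ≤ ((Finset.range r).erase k0).card := by
        by_cases hk : k0 ∈ Finset.range r
        · rw [Finset.card_erase_of_mem hk, Finset.card_range]
        · rw [Finset.erase_eq_of_notMem hk, Finset.card_range]; omega
    _ ≤ _ := Finset.card_le_card hsub

lemma card_filter_pair_ge {r k0 : ℕ} {P Q : ℕ → Prop} [DecidablePred P] [DecidablePred Q] (h : ∀ k, k < r → k ≠ k0 → P k ∨ Q k) :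
    r - 1 ≤ ((Finset.range r).filter (fun k => P k)).card
      + ((Finset.range r).filter (fun k => Q k)).card := by
  have h1 : r - 1 ≤ ((Finset.range r).filter (fun k => P k ∨ Q k)).card := card_filter_ge h
  have h2 : (Finset.range r).filter (fun k => P k ∨ Q k)
      = (Finset.range r).filter (fun k => P k) ∪ (Finset.range r).filter (fun k => Q k) :=
    Finset.filter_or _ _ _
  have h3 : ((Finset.range r).filter (fun k => P k ∨ Q k)).card
      ≤ ((Finset.range r).filter (fun k => P k)).card
      + ((Finset.range r).filter (fun k => Q k)).card := by
    rw [h2]; exact Finset.card_union_le _ _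
  exact h1.trans h3

end RB

namespace RB

open scoped Classical

variable {V : Type*} [Fintype V] [DecidableEq V]

/-- distance to `S` in the contraction, as a total function. -/
noncomputable def dfun (G : SimpleGraph V) (S : Finset V) (v : V) : ℕ∞ :=
  if h : v ∈ (S : Set V) then 0 else (contract G (S : Set V)).edist none (some ⟨v, h⟩)

lemma dfun_spec (G : SimpleGraph V) (S : Finset V) {v : V} (hv : v ∉ S) :
    dfun G S v = (contract G (S : Set V)).edist none (some ⟨v, by simpa using hv⟩) := by
  rw [dfun, dif_neg]

lemma contract_adj_some (G : SimpleGraph V) (S : Finset V) {a b : V}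
    (ha : a ∉ (S : Set V)) (hb : b ∉ (S : Set V)) (h : G.Adj a b) :
    (contract G (S : Set V)).Adj (some ⟨a, ha⟩) (some ⟨b, hb⟩) := by
  rw [contract, SimpleGraph.fromRel_adj]
  refine ⟨?_, Or.inl h⟩
  intro hEq
  apply h.ne
  simpa [Subtype.ext_iff] using hEq

lemma contract_adj_none (G : SimpleGraph V) (S : Finset V) {a b : V}
    (ha : a ∈ S) (hb : b ∉ (S : Set V)) (h : G.Adj a b) :
    (contract G (S : Set V)).Adj (some ⟨b, hb⟩) none := by
  rw [contract, SimpleGraph.fromRel_adj]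
  exact ⟨by simp, Or.inl ⟨a, by simpa using ha, h.symm⟩⟩

/-- a neighbour of `S` is at distance 1. -/
lemma dfun_attach (G : SimpleGraph V) (S : Finset V) {a b : V}
    (ha : a ∈ S) (hb : b ∉ S) (h : G.Adj a b) : dfun G S b = 1 := by
  rw [dfun_spec G S hb]
  rw [SimpleGraph.edist_eq_one_iff_adj]
  exact (contract_adj_none G S ha (by simpa using hb) h).symm

/-- triangle inequality along an edge outside `S`. -/
lemma dfun_step (G : SimpleGraph V) (S : Finset V) {a b : V}
    (ha : a ∉ S) (hb : b ∉ S) (h : G.Adj a b) : dfun G S b ≤ dfun G S a + 1 := by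
  rw [dfun_spec G S hb, dfun_spec G S ha]
  refine le_trans (SimpleGraph.edist_triangle (v := (some ⟨a, by simpa using ha⟩))) ?_
  gcongr
  exact le_of_eq (SimpleGraph.edist_eq_one_iff_adj.mpr
    (contract_adj_some G S (by simpa using ha) (by simpa using hb) h))

/-- no edge within a layer at distance `≤ ρ - 2` (uses odd girth of the contraction). -/
lemma dfun_layer (G : SimpleGraph V) (S : Finset V) {ρ : ℕ} (hρ : 2 ≤ ρ)
    (hog : HasOddGirth (contract G (S : Set V)) (2 * ρ - 1)) {a b : V} {m : ℕ}
    (ha : a ∉ S) (hb : b ∉ S) (h : G.Adj a b)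
    (hma : dfun G S a = (m : ℕ∞)) (hmb : dfun G S b = (m : ℕ∞)) : ρ ≤ m + 1 := by
  rw [dfun_spec G S ha] at hma
  rw [dfun_spec G S hb] at hmb
  obtain ⟨p1, hp1⟩ := SimpleGraph.exists_walk_of_edist_eq_coe hma
  obtain ⟨p2, hp2⟩ := SimpleGraph.exists_walk_of_edist_eq_coe hmb
  have hadj := contract_adj_some G S (by simpa using ha) (by simpa using hb) h
  set c : (contract G (S : Set V)).Walk none none :=
    p1.append (SimpleGraph.Walk.cons hadj p2.reverse) with hc
  have hlen : c.length = 2 * m + 1 := by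
    rw [hc, SimpleGraph.Walk.length_append, SimpleGraph.Walk.length_cons,
      SimpleGraph.Walk.length_reverse, hp1, hp2]
    omega
  have hodd : Odd c.length := by rw [hlen]; exact ⟨m, by omega⟩
  obtain ⟨z, c', hcyc, hodd', hle⟩ := exists_odd_cycle c.length c le_rfl hodd
  have := hog.2.2 z c' hcyc hodd'
  rw [hlen] at hle
  omega

end RB

namespace RB

open scoped Classical

variable {V : Type*} [Fintype V] [DecidableEq V]

lemma phiN_le {r k : ℕ} (hk : k < r) : phiN r k ≤ r := by
  rw [phiN]; split <;> omega

lemma phiN_odd {r k : ℕ} (hsp : ¬ (r % 2 = 1 ∧ k = r - 1) ∨ r % 2 = 1) : phiN r k % 2 = 1 := by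
  rw [phiN]; split
  · rename_i h; omega
  · omega

/-- (L1) an attachment vertex is in all but at most one candidate. -/
lemma freq_attach_ge (G : SimpleGraph V) (S I : Finset V) (col : V → Fin 2) {r : ℕ}
    (hρ : 2 ≤ r) {b : V} (hb : b ∉ S) (hd1 : dfun G S b = 1) :
    r - 1 ≤ freq S I col (dfun G S) r b := by
  rw [freq]
  refine card_filter_ge (k0 := if (col b : ℕ) = 0 then 1 else 0) ?_
  intro k hk hkne
  rw [mem_Ncand]
  refine ⟨hb, ?_⟩
  have hcb : (col b : ℕ) < 2 := (col b).isLt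
  have hodd1 : dfun G S b = ((2 * 0 + 1 : ℕ) : ℕ∞) := by rw [hd1]; norm_num
  by_cases hsp : r % 2 = 1 ∧ k = r - 1
  · left
    refine ⟨⟨0, hodd1⟩, ?_⟩
    rw [phiN, if_pos hsp, hd1]
    exact_mod_cast (by omega : 1 < r)
  · rw [phiN, if_neg hsp]
    by_cases hk2 : 2 ≤ k
    · left
      refine ⟨⟨0, hodd1⟩, ?_⟩
      rw [hd1]
      exact_mod_cast (by omega : 1 < 2 * (k / 2) + 1)
    · right
      constructor
      · rw [hd1]; exact_mod_cast (by omega : 2 * (k / 2) + 1 ≤ 1)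
      · rw [if_neg hsp]
        by_cases hc0 : (col b : ℕ) = 0
        · rw [if_pos hc0] at hkne; omega
        · rw [if_neg hc0] at hkne; omega

/-- (L2, step version) -/
lemma freq_pair_key_step (G : SimpleGraph V) (S I : Finset V) (col : V → Fin 2) {r : ℕ}
    (hρ : 2 ≤ r) (hcol : ∀ ⦃a b : V⦄, a ∉ S → b ∉ S → G.Adj a b → col a ≠ col b)
    {u v : V} (hu : u ∉ S) (hv : v ∉ S) (huv : G.Adj u v) {m : ℕ}
    (hdu : dfun G S u = (m : ℕ∞)) (hdv : dfun G S v = ((m + 1 : ℕ) : ℕ∞)) :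
    ∃ k0, ∀ k, k < r → k ≠ k0 →
      u ∈ Ncand S I col (dfun G S) r k ∨ v ∈ Ncand S I col (dfun G S) r k := by
  have hcuv : (col u : ℕ) ≠ (col v : ℕ) := by
    intro h; exact hcol hu hv huv (Fin.ext h)
  have hc2u : (col u : ℕ) < 2 := (col u).isLt
  have hc2v : (col v : ℕ) < 2 := (col v).isLt
  -- region helper
  have hreg : ∀ k, ¬ (r % 2 = 1 ∧ k = r - 1) → phiN r k ≤ m →
      u ∈ Ncand S I col (dfun G S) r k ∨ v ∈ Ncand S I col (dfun G S) r k := by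
    intro k hsp hple
    have hgu : ((phiN r k : ℕ) : ℕ∞) ≤ dfun G S u := by
      rw [hdu]; exact_mod_cast hple
    have hgv : ((phiN r k : ℕ) : ℕ∞) ≤ dfun G S v := by
      rw [hdv]; exact_mod_cast (by omega : phiN r k ≤ m + 1)
    rcases (by omega : (col u : ℕ) = k % 2 ∨ (col v : ℕ) = k % 2) with hcu | hcv
    · exact Or.inl (mem_Ncand.mpr ⟨hu, Or.inr ⟨hgu, by rw [if_neg hsp]; exact hcu⟩⟩)
    · exact Or.inr (mem_Ncand.mpr ⟨hv, Or.inr ⟨hgv, by rw [if_neg hsp]; exact hcv⟩⟩)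
  by_cases hrn : r ≤ m + 1
  · refine ⟨r - 1, fun k hk hkne => ?_⟩
    have hsp : ¬ (r % 2 = 1 ∧ k = r - 1) := fun h => hkne h.2
    refine hreg k hsp ?_
    rw [phiN, if_neg hsp]; omega
  · by_cases hpar : (m + 1) % 2 = 1
    · -- d v odd
      have hvodd : ∃ s : ℕ, dfun G S v = ((2 * s + 1 : ℕ) : ℕ∞) :=
        ⟨m / 2, by rw [hdv]; congr 1; omega⟩
      obtain ⟨s, hs⟩ := hvodd
      have hsm : m + 1 = 2 * s + 1 := by
        have := hs.symm.trans hdv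
        have := (Nat.cast_inj (R := ℕ∞)).mp this
        omega
      refine ⟨2 * s + (if (col v : ℕ) = 0 then 1 else 0), fun k hk hkne => ?_⟩
      by_cases hsp : r % 2 = 1 ∧ k = r - 1
      · refine Or.inr (mem_Ncand.mpr ⟨hv, Or.inl ⟨⟨s, hs⟩, ?_⟩⟩)
        rw [phiN, if_pos hsp, hs]
        exact_mod_cast (by omega : 2 * s + 1 < r)
      · rcases (by omega : 2 * (k / 2) + 1 ≤ m ∨ 2 * (k / 2) + 1 = m + 1 ∨ m + 1 < 2 * (k / 2) + 1)
          with h1 | h2 | h3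
        · exact hreg k hsp (by rw [phiN, if_neg hsp]; exact h1)
        · refine Or.inr (mem_Ncand.mpr ⟨hv, Or.inr ⟨?_, ?_⟩⟩)
          · rw [phiN, if_neg hsp, hdv]
            exact_mod_cast (le_of_eq h2)
          · rw [if_neg hsp]
            by_cases hc0 : (col v : ℕ) = 0
            · rw [if_pos hc0] at hkne; rw [hc0]; omega
            · rw [if_neg hc0] at hkne; omega
        · refine Or.inr (mem_Ncand.mpr ⟨hv, Or.inl ⟨⟨s, hs⟩, ?_⟩⟩)
          rw [phiN, if_neg hsp, hs]
          exact_mod_cast (by omega : 2 * s + 1 < 2 * (k / 2) + 1)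
    · -- d u odd
      have hm2 : m = 2 * (m / 2) + 1 := by omega
      refine ⟨r - 1, fun k hk hkne => ?_⟩
      have hsp : ¬ (r % 2 = 1 ∧ k = r - 1) := fun h => hkne h.2
      rcases (by omega : 2 * (k / 2) + 1 ≤ m ∨ m < 2 * (k / 2) + 1) with h1 | h2
      · exact hreg k hsp (by rw [phiN, if_neg hsp]; exact h1)
      · refine Or.inl (mem_Ncand.mpr ⟨hu, Or.inl ⟨⟨m / 2, by rw [hdu]; exact Nat.cast_inj.mpr hm2⟩, ?_⟩⟩)
        rw [phiN, if_neg hsp, hdu]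
        exact_mod_cast h2

/-- (L2) two adjacent vertices outside `S` are jointly in all but at most one candidate. -/
lemma freq_pair_ge (G : SimpleGraph V) (S I : Finset V) (col : V → Fin 2) {ρ : ℕ}
    (hρ : 2 ≤ ρ) (hog : HasOddGirth (contract G (S : Set V)) (2 * ρ - 1))
    (hcol : ∀ ⦃a b : V⦄, a ∉ S → b ∉ S → G.Adj a b → col a ≠ col b)
    {u v : V} (hu : u ∉ S) (hv : v ∉ S) (huv : G.Adj u v) :
    ρ - 1 ≤ freq S I col (dfun G S) ρ u + freq S I col (dfun G S) ρ v := by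
  have hcuv : (col u : ℕ) ≠ (col v : ℕ) := by
    intro h; exact hcol hu hv huv (Fin.ext h)
  have hc2u : (col u : ℕ) < 2 := (col u).isLt
  have hc2v : (col v : ℕ) < 2 := (col v).isLt
  have t1 : dfun G S v ≤ dfun G S u + 1 := dfun_step G S hu hv huv
  have t2 : dfun G S u ≤ dfun G S v + 1 := dfun_step G S hv hu huv.symm
  have key : ∃ k0, ∀ k, k < ρ → k ≠ k0 →
      u ∈ Ncand S I col (dfun G S) ρ k ∨ v ∈ Ncand S I col (dfun G S) ρ k := by
    cases hdu : dfun G S u with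
    | top =>
      cases hdv : dfun G S v with
      | top =>
        refine ⟨ρ - 1, fun k hk hkne => ?_⟩
        have hsp : ¬ (ρ % 2 = 1 ∧ k = ρ - 1) := fun h => hkne h.2
        rcases (by omega : (col u : ℕ) = k % 2 ∨ (col v : ℕ) = k % 2) with hcu | hcv
        · exact Or.inl (mem_Ncand.mpr ⟨hu, Or.inr ⟨by rw [hdu]; exact le_top,
            by rw [if_neg hsp]; exact hcu⟩⟩)
        · exact Or.inr (mem_Ncand.mpr ⟨hv, Or.inr ⟨by rw [hdv]; exact le_top,
            by rw [if_neg hsp]; exact hcv⟩⟩)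
      | coe n =>
        exfalso
        rw [hdu, hdv] at t2
        have : ((n : ℕ∞) + 1) < ⊤ := by
          have : ((n + 1 : ℕ) : ℕ∞) < ⊤ := WithTop.coe_lt_top _
          rwa [Nat.cast_add, Nat.cast_one] at this
        exact absurd (lt_of_le_of_lt t2 this) (lt_irrefl _)
    | coe m =>
      cases hdv : dfun G S v with
      | top =>
        exfalso
        rw [hdu, hdv] at t1
        have : ((m : ℕ∞) + 1) < ⊤ := by
          have : ((m + 1 : ℕ) : ℕ∞) < ⊤ := WithTop.coe_lt_top _
          rwa [Nat.cast_add, Nat.cast_one] at this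
        exact absurd (lt_of_le_of_lt t1 this) (lt_irrefl _)
      | coe n =>
        rw [hdu, hdv] at t1 t2
        have hmn1 : n ≤ m + 1 := by exact_mod_cast t1
        have hmn2 : m ≤ n + 1 := by exact_mod_cast t2
        rcases (by omega : m = n ∨ n = m + 1 ∨ m = n + 1) with he | hst | hst
        · -- same layer
          subst he
          have hlay := dfun_layer G S hρ hog hu hv huv hdu hdv
          refine ⟨ρ - 1, fun k hk hkne => ?_⟩
          have hsp : ¬ (ρ % 2 = 1 ∧ k = ρ - 1) := fun h => hkne h.2
          have hple : phiN ρ k ≤ m := by rw [phiN, if_neg hsp]; omega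
          rcases (by omega : (col u : ℕ) = k % 2 ∨ (col v : ℕ) = k % 2) with hcu | hcv
          · exact Or.inl (mem_Ncand.mpr ⟨hu, Or.inr ⟨by rw [hdu]; exact_mod_cast hple,
              by rw [if_neg hsp]; exact hcu⟩⟩)
          · exact Or.inr (mem_Ncand.mpr ⟨hv, Or.inr ⟨by rw [hdv]; exact_mod_cast hple,
              by rw [if_neg hsp]; exact hcv⟩⟩)
        · exact freq_pair_key_step G S I col hρ hcol hu hv huv hdu
            (by rw [hdv]; exact Nat.cast_inj.mpr hst)
        · obtain ⟨k0, hk0⟩ := freq_pair_key_step G S I col hρ hcol hv hu huv.symm hdv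
            (by rw [hdu]; exact Nat.cast_inj.mpr hst)
          exact ⟨k0, fun k hk hkne => (hk0 k hk hkne).symm⟩
  obtain ⟨k0, hk0⟩ := key
  have := card_filter_pair_ge (r := ρ) (k0 := k0)
    (P := fun k => u ∈ Ncand S I col (dfun G S) ρ k)
    (Q := fun k => v ∈ Ncand S I col (dfun G S) ρ k) hk0
  rw [freq, freq]
  exact this

/-- Each candidate is independent. -/
lemma Ncand_indep (G : SimpleGraph V) (S I : Finset V) (col : V → Fin 2) {ρ : ℕ}
    (hρ : 2 ≤ ρ) (hog : HasOddGirth (contract G (S : Set V)) (2 * ρ - 1))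
    (hcol : ∀ ⦃a b : V⦄, a ∉ S → b ∉ S → G.Adj a b → col a ≠ col b)
    (hI : ∀ ⦃a : V⦄, a ∈ I → ∀ ⦃b : V⦄, b ∈ I → ¬ G.Adj a b)
    {k : ℕ} (hk : k < ρ) :
    ∀ u ∈ Ncand S I col (dfun G S) ρ k, ∀ v ∈ Ncand S I col (dfun G S) ρ k, ¬ G.Adj u v := by
  intro u hu' v hv' huv
  rw [mem_Ncand] at hu' hv'
  obtain ⟨hu, hcu⟩ := hu'
  obtain ⟨hv, hcv⟩ := hv'
  have t1 : dfun G S v ≤ dfun G S u + 1 := dfun_step G S hu hv huv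
  have t2 : dfun G S u ≤ dfun G S v + 1 := dfun_step G S hv hu huv.symm
  have hple : phiN ρ k ≤ ρ := phiN_le hk
  have hpodd : phiN ρ k % 2 = 1 := by
    rw [phiN]; split
    · rename_i h; omega
    · omega
  rcases hcu with ⟨⟨s, hds⟩, hlt⟩ | ⟨hge, hside⟩ <;>
    rcases hcv with ⟨⟨s', hds'⟩, hlt'⟩ | ⟨hge', hside'⟩
  · -- both odd layers
    rw [hds, hds'] at t1 t2
    have h1 : 2 * s' + 1 ≤ 2 * s + 1 + 1 := by
      rw [show ((2 * s + 1 : ℕ) : ℕ∞) + 1 = ((2 * s + 1 + 1 : ℕ) : ℕ∞) by push_cast; ring] at t1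
      exact_mod_cast t1
    have h2 : 2 * s + 1 ≤ 2 * s' + 1 + 1 := by
      rw [show ((2 * s' + 1 : ℕ) : ℕ∞) + 1 = ((2 * s' + 1 + 1 : ℕ) : ℕ∞) by push_cast; ring] at t2
      exact_mod_cast t2
    have hss : s = s' := by omega
    subst hss
    have hlay := dfun_layer G S hρ hog hu hv huv hds hds'
    have hlt2 : 2 * s + 1 < phiN ρ k := by
      rw [hds] at hlt; exact_mod_cast hlt
    omega
  · -- u odd, v region
    rw [hds] at t1 hlt
    have hp1 : ((phiN ρ k : ℕ) : ℕ∞) ≤ ((2 * s + 1 + 1 : ℕ) : ℕ∞) := by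
      refine le_trans hge' (le_trans t1 (le_of_eq (by push_cast; ring)))
    have hp2 : phiN ρ k ≤ 2 * s + 2 := by exact_mod_cast hp1
    have hp3 : 2 * s + 1 < phiN ρ k := by exact_mod_cast hlt
    omega
  · -- v odd, u region
    rw [hds'] at t2 hlt'
    have hp1 : ((phiN ρ k : ℕ) : ℕ∞) ≤ ((2 * s' + 1 + 1 : ℕ) : ℕ∞) := by
      refine le_trans hge (le_trans t2 (le_of_eq (by push_cast; ring)))
    have hp2 : phiN ρ k ≤ 2 * s' + 2 := by exact_mod_cast hp1
    have hp3 : 2 * s' + 1 < phiN ρ k := by exact_mod_cast hlt'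
    omega
  · -- both region
    by_cases hsp : ρ % 2 = 1 ∧ k = ρ - 1
    · rw [if_pos hsp] at hside hside'
      exact hI hside hside' huv
    · rw [if_neg hsp] at hside hside'
      exact hcol hu hv huv (Fin.ext (hside.trans hside'.symm))

end RB

namespace RB

open scoped Classical

variable {V : Type*} [Fintype V] [DecidableEq V]

/-- both-endpoints-in-S indicator -/
noncomputable def sprod (S : Finset V) : Sym2 V → ℝ :=
  Sym2.lift ⟨fun a b => (if a ∈ S then (1:ℝ) else 0) * (if b ∈ S then (1:ℝ) else 0),
    fun a b => by ring⟩

@[simp] lemma sprod_mk (S : Finset V) (a b : V) :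
    sprod S s(a, b) = (if a ∈ S then (1:ℝ) else 0) * (if b ∈ S then (1:ℝ) else 0) := rfl

lemma univ_isVC (G : SimpleGraph V) : IsVC G Finset.univ :=
  fun u _ _ => Or.inl (Finset.mem_univ u)

lemma OPT_bddBelow (G : SimpleGraph V) (w : V → ℝ) (hw0 : ∀ v, 0 ≤ w v) :
    BddBelow {t : ℝ | ∃ C : Finset V, IsVC G C ∧ t = ∑ v ∈ C, w v} := by
  refine ⟨0, fun t ht => ?_⟩
  obtain ⟨C, -, rfl⟩ := ht
  exact Finset.sum_nonneg fun v _ => hw0 v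

lemma OPT_le_sum (G : SimpleGraph V) (w : V → ℝ) (hw0 : ∀ v, 0 ≤ w v)
    {C : Finset V} (hC : IsVC G C) : OPT G w ≤ ∑ v ∈ C, w v :=
  csInf_le (OPT_bddBelow G w hw0) ⟨C, hC, rfl⟩

lemma le_OPT (G : SimpleGraph V) (w : V → ℝ) {z : ℝ}
    (h : ∀ C : Finset V, IsVC G C → z ≤ ∑ v ∈ C, w v) : z ≤ OPT G w := by
  refine le_csInf ⟨∑ v, w v, Finset.univ, univ_isVC G, rfl⟩ ?_
  rintro t ⟨C, hC, rfl⟩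
  exact h C hC

end RB


set_option maxHeartbeats 3200000

/-- for an arbitrary bipartizing set `S` with non-bipartite contraction of
odd girth `2ρ-1`, the round-and-bipartize value is at most
`((1 + 1/ρ)(1-α) + 2α) · OPT(G,w)`, where `α = y(E[S])`. -/
theorem round_bipartize_arbitrary_set {V : Type*} [Fintype V] [DecidableEq V]
    (G : SimpleGraph V) (S : Finset V)
    (hbip : (Gdel G ↑S).Colorable 2) (hnb : ¬ (contract G ↑S).Colorable 2)
    (ρ : ℕ) (hρ : 2 ≤ ρ) (hog : HasOddGirth (contract G ↑S) (2 * ρ - 1))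
    (w : V → ℝ) (hw0 : ∀ v, 0 ≤ w v) (hw2 : ∑ v, w v = 2)
    (y : Sym2 V → ℝ) (hdc : IsDualCert G w y)
    (α : ℝ)
    (hα : α = ysum y (fun e => e ∈ G.edgeSet ∧ ∃ p ∈ S, ∃ q ∈ S, e = s(p, q))) :
    ∑ v ∈ S, w v + OPT (Gdel G ↑S) w ≤
      ((1 + 1 / (ρ : ℝ)) * (1 - α) + 2 * α) * OPT G w := by
  
  classical
  open RB in
  obtain ⟨colC⟩ := hbip
  set col : V → Fin 2 := fun v => colC v with hcoldef
  have hcol : ∀ ⦃a b : V⦄, a ∉ S → b ∉ S → G.Adj a b → col a ≠ col b := by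
    intro a b ha hb hadj
    refine colC.valid ?_
    rw [Gdel, SimpleGraph.fromRel_adj]
    exact ⟨hadj.ne, Or.inl ⟨hadj, by simpa using ha, by simpa using hb⟩⟩
  have hy0 := hdc.1
  have hyE := hdc.2.1
  -- total mass of y is 1
  have hysum1 : ∑ e : Sym2 V, y e = 1 := by
    have hm := RB.masterW G w y hdc (fun _ => 1)
    simp only [one_mul] at hm
    rw [hw2] at hm
    have h2 : ∑ e : Sym2 V, y e * RB.esum (fun _ => (1:ℝ)) e = ∑ e : Sym2 V, y e * 2 := by
      refine Finset.sum_congr rfl fun e _ => ?_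
      induction e using Sym2.ind with
      | _ a b => rw [RB.esum_mk]; norm_num
    rw [h2, ← Finset.sum_mul] at hm
    linarith
  -- α as an edge sum
  have halpha : α = ∑ e : Sym2 V, y e * RB.sprod S e := by
    rw [hα, ysum]
    refine Finset.sum_congr rfl fun e _ => ?_
    induction e using Sym2.ind with
    | _ a b =>
      by_cases he : s(a, b) ∈ G.edgeSet
      · by_cases hss : a ∈ S ∧ b ∈ S
        · rw [if_pos ⟨he, a, hss.1, b, hss.2, rfl⟩, RB.sprod_mk,
            if_pos hss.1, if_pos hss.2]
          ring
        · rw [if_neg, RB.sprod_mk]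
          · rcases Classical.em (a ∈ S) with ha | ha
            · have hb : ¬ b ∈ S := fun hb => hss ⟨ha, hb⟩
              rw [if_neg hb]; ring
            · rw [if_neg ha]; ring
          · rintro ⟨-, p, hp, q, hq, hpq⟩
            rcases Sym2.eq_iff.mp hpq with ⟨h1, h2⟩ | ⟨h1, h2⟩
            · exact hss ⟨h1 ▸ hp, h2 ▸ hq⟩
            · exact hss ⟨h1 ▸ hq, h2 ▸ hp⟩
      · rw [if_neg (fun h => he h.1), hyE _ he]
        ring
  have hα0 : 0 ≤ α := by
    rw [halpha]
    refine Finset.sum_nonneg fun e _ => mul_nonneg (hy0 e) ?_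
    induction e using Sym2.ind with
    | _ a b => rw [RB.sprod_mk]; positivity
  have hα1 : α ≤ 1 := by
    rw [halpha, ← hysum1]
    refine Finset.sum_le_sum fun e _ => ?_
    induction e using Sym2.ind with
    | _ a b =>
      rw [RB.sprod_mk]
      have h1 : (if a ∈ S then (1:ℝ) else 0) * (if b ∈ S then (1:ℝ) else 0) ≤ 1 := by
        split_ifs <;> norm_num
      calc y s(a,b) * _ ≤ y s(a,b) * 1 := mul_le_mul_of_nonneg_left h1 (hy0 _)
        _ = y s(a,b) := mul_one _
  have hρR : (0:ℝ) < (ρ : ℝ) := by exact_mod_cast (by omega : 0 < ρ)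
  set d := RB.dfun G S with hd
  set coeff : ℝ := (1 + 1 / (ρ : ℝ)) * (1 - α) + 2 * α with hcoeff
  have main : ∀ C : Finset V, IsVC G C →
      ∑ v ∈ S, w v + OPT (Gdel G ↑S) w ≤ coeff * ∑ v ∈ C, w v := by
    intro C hC
    set I : Finset V := Finset.univ \ C with hI
    have hmemI : ∀ v, v ∈ I ↔ v ∉ C := by intro v; simp [hI]
    have hIind : ∀ ⦃a : V⦄, a ∈ I → ∀ ⦃b : V⦄, b ∈ I → ¬ G.Adj a b := by
      intro a ha b hb hadj
      rcases hC hadj with h | h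
      · exact (hmemI a).mp ha h
      · exact (hmemI b).mp hb h
    -- every cover has weight at least 1
    have hT1 : 1 ≤ ∑ v ∈ C, w v := by
      have hCe : ∑ v ∈ C, w v = ∑ v, (if v ∈ C then (1:ℝ) else 0) * w v := by
        rw [show ∑ v, (if v ∈ C then (1:ℝ) else 0) * w v = ∑ v, (if v ∈ C then w v else 0) from
          Finset.sum_congr rfl (fun v _ => by by_cases h : v ∈ C <;> simp [h]),
          Finset.sum_ite_mem, Finset.univ_inter]
      have hm := RB.masterW G w y hdc (fun v => if v ∈ C then (1:ℝ) else 0)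
      have hle : ∑ e : Sym2 V, y e
          ≤ ∑ e : Sym2 V, y e * RB.esum (fun v => if v ∈ C then (1:ℝ) else 0) e := by
        refine Finset.sum_le_sum fun e _ => ?_
        induction e using Sym2.ind with
        | _ a b =>
          by_cases he : s(a, b) ∈ G.edgeSet
          · have hadj : G.Adj a b := he
            have h1 : (1:ℝ) ≤ RB.esum (fun v => if v ∈ C then (1:ℝ) else 0) s(a, b) := by
              rw [RB.esum_mk]
              by_cases h1 : a ∈ C <;> by_cases h2 : b ∈ C <;>
                simp only [if_pos, if_neg, h1, h2, if_true, if_false]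
              · norm_num
              · norm_num
              · norm_num
              · rcases hC hadj with h | h
                · exact absurd h h1
                · exact absurd h h2
            calc y s(a, b) = y s(a, b) * 1 := (mul_one _).symm
              _ ≤ _ := mul_le_mul_of_nonneg_left h1 (hy0 _)
          · rw [hyE _ he]; simp
      linarith [hysum1, hCe, hm, hle]
    -- Step 1 : z ≤ 2 - w(N k) for every candidate
    have hstep1 : ∀ k, k < ρ →
        ∑ v ∈ S, w v + OPT (Gdel G ↑S) w ≤ 2 - ∑ v ∈ RB.Ncand S I col d ρ k, w v := by
      intro k hk
      have hNS : ∀ v ∈ RB.Ncand S I col d ρ k, v ∉ S := fun v hv => (RB.mem_Ncand.mp hv).1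
      set N := RB.Ncand S I col d ρ k with hN
      set D : Finset V := Finset.univ \ (S ∪ N) with hD
      have hmemD : ∀ v, v ∉ D → v ∈ S ∨ v ∈ N := by
        intro v hv
        by_cases hvS : v ∈ S
        · exact Or.inl hvS
        · exact Or.inr ((by simpa [hD] using hv : v ∉ S → v ∈ N) hvS)
      have hDvc : IsVC (Gdel G ↑S) D := by
        intro u v hadj
        have hGadj : G.Adj u v ∧ u ∉ S ∧ v ∉ S := by
          rw [Gdel, SimpleGraph.fromRel_adj] at hadj
          rcases hadj.2 with ⟨h1, h2, h3⟩ | ⟨h1, h2, h3⟩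
          · exact ⟨h1, by simpa using h2, by simpa using h3⟩
          · exact ⟨h1.symm, by simpa using h3, by simpa using h2⟩
        by_cases hu : u ∈ D
        · exact Or.inl hu
        · have huN : u ∈ N := (hmemD u hu).resolve_left hGadj.2.1
          right
          by_contra hv
          have hvN : v ∈ N := (hmemD v hv).resolve_left hGadj.2.2
          exact RB.Ncand_indep G S I col hρ hog hcol hIind hk u huN v hvN hGadj.1
      have hOPTD : OPT (Gdel G ↑S) w ≤ ∑ v ∈ D, w v := RB.OPT_le_sum _ w hw0 hDvc
      have hdisj : Disjoint S N := by
        rw [Finset.disjoint_right]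
        intro v hvN hvS
        exact hNS v hvN hvS
      have hsplit : ∑ v ∈ S, w v + ∑ v ∈ D, w v + ∑ v ∈ N, w v = 2 := by
        have h1 : ∑ v ∈ D, w v + ∑ v ∈ (S ∪ N), w v = ∑ v, w v :=
          Finset.sum_sdiff (Finset.subset_univ _)
        rw [Finset.sum_union hdisj, hw2] at h1
        linarith
      linarith
    -- Step 2 : double counting of frequencies
    have hstep2 : ∑ k ∈ Finset.range ρ, ∑ v ∈ RB.Ncand S I col d ρ k, w v
        = ∑ v, (RB.freq S I col d ρ v : ℝ) * w v := by
      have h1 : ∀ k, ∑ v ∈ RB.Ncand S I col d ρ k, w v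
          = ∑ v, if v ∈ RB.Ncand S I col d ρ k then w v else 0 := by
        intro k
        rw [Finset.sum_ite_mem, Finset.univ_inter]
      rw [Finset.sum_congr rfl (fun k _ => h1 k), Finset.sum_comm]
      refine Finset.sum_congr rfl fun v _ => ?_
      rw [← Finset.sum_filter, Finset.sum_const, RB.freq, nsmul_eq_mul]
    -- Step 3 : the master pointwise inequality
    have hstep3 : (ρ:ℝ) * ∑ v ∈ I, w v
        ≤ (∑ v, (RB.freq S I col d ρ v : ℝ) * w v) + (∑ v ∈ C, w v) + ((ρ:ℝ) - 1) * α := by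
      set f : V → ℝ := fun v => (if v ∈ I then (ρ:ℝ) else 0) - (RB.freq S I col d ρ v : ℝ)
        - (if v ∈ C then (1:ℝ) else 0) with hf
      have hcast1 : ((ρ - 1 : ℕ) : ℝ) = (ρ:ℝ) - 1 := by
        rw [Nat.cast_sub (by omega)]; norm_num
      have hptwise : ∑ e : Sym2 V, y e * RB.esum f e
          ≤ ∑ e : Sym2 V, y e * (((ρ:ℝ) - 1) * RB.sprod S e) := by
        refine Finset.sum_le_sum fun e _ => ?_
        induction e using Sym2.ind with
        | _ a b =>
          by_cases he : s(a, b) ∈ G.edgeSet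
          · refine mul_le_mul_of_nonneg_left ?_ (hy0 _)
            have hadj : G.Adj a b := he
            rw [RB.esum_mk, RB.sprod_mk]
            simp only [hf]
            have hfa0 : (0:ℝ) ≤ (RB.freq S I col d ρ a : ℝ) := Nat.cast_nonneg _
            have hfb0 : (0:ℝ) ≤ (RB.freq S I col d ρ b : ℝ) := Nat.cast_nonneg _
            have hρ2 : (2:ℝ) ≤ (ρ:ℝ) := by exact_mod_cast hρ
            by_cases haI : a ∈ I
            · by_cases hbI : b ∈ I
              · exact absurd hadj (hIind haI hbI)
              · -- a ∈ I, b ∉ I (so b ∈ C)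
                have haC : a ∉ C := (hmemI a).mp haI
                have hbC : b ∈ C := by
                  by_contra hbC
                  exact hbI ((hmemI b).mpr hbC)
                rw [if_pos haI, if_neg hbI, if_neg haC, if_pos hbC]
                by_cases haS : a ∈ S
                · by_cases hbS : b ∈ S
                  · rw [if_pos haS, if_pos hbS]
                    nlinarith
                  · rw [if_pos haS, if_neg hbS]
                    have hd1 : d b = 1 := RB.dfun_attach G S haS hbS hadj
                    have hfr := RB.freq_attach_ge G S I col hρ hbS hd1
                    have hfrR : ((ρ:ℝ) - 1) ≤ (RB.freq S I col d ρ b : ℝ) := by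
                      rw [← hcast1]; exact_mod_cast hfr
                    nlinarith
                · rw [if_neg haS]
                  by_cases hbS : b ∈ S
                  · have hd1 : d a = 1 := RB.dfun_attach G S hbS haS hadj.symm
                    have hfr := RB.freq_attach_ge G S I col hρ haS hd1
                    have hfrR : ((ρ:ℝ) - 1) ≤ (RB.freq S I col d ρ a : ℝ) := by
                      rw [← hcast1]; exact_mod_cast hfr
                    nlinarith
                  · have hfr := RB.freq_pair_ge G S I col hρ hog hcol haS hbS hadj
                    have hfrR : ((ρ:ℝ) - 1)
                        ≤ (RB.freq S I col d ρ a : ℝ) + (RB.freq S I col d ρ b : ℝ) := by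
                      rw [← hcast1]; exact_mod_cast hfr
                    nlinarith
            · by_cases hbI : b ∈ I
              · -- symmetric : b ∈ I, a ∉ I
                have hbC : b ∉ C := (hmemI b).mp hbI
                have haC : a ∈ C := by
                  by_contra haC
                  exact haI ((hmemI a).mpr haC)
                rw [if_neg haI, if_pos hbI, if_pos haC, if_neg hbC]
                by_cases hbS : b ∈ S
                · by_cases haS : a ∈ S
                  · rw [if_pos haS, if_pos hbS]
                    nlinarith
                  · rw [if_neg haS]
                    have hd1 : d a = 1 := RB.dfun_attach G S hbS haS hadj.symm
                    have hfr := RB.freq_attach_ge G S I col hρ haS hd1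
                    have hfrR : ((ρ:ℝ) - 1) ≤ (RB.freq S I col d ρ a : ℝ) := by
                      rw [← hcast1]; exact_mod_cast hfr
                    nlinarith
                · rw [if_neg hbS]
                  by_cases haS : a ∈ S
                  · rw [if_pos haS]
                    have hd1 : d b = 1 := RB.dfun_attach G S haS hbS hadj
                    have hfr := RB.freq_attach_ge G S I col hρ hbS hd1
                    have hfrR : ((ρ:ℝ) - 1) ≤ (RB.freq S I col d ρ b : ℝ) := by
                      rw [← hcast1]; exact_mod_cast hfr
                    nlinarith
                  · rw [if_neg haS]
                    have hfr := RB.freq_pair_ge G S I col hρ hog hcol haS hbS hadj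
                    have hfrR : ((ρ:ℝ) - 1)
                        ≤ (RB.freq S I col d ρ a : ℝ) + (RB.freq S I col d ρ b : ℝ) := by
                      rw [← hcast1]; exact_mod_cast hfr
                    nlinarith
              · -- both in C
                have haC : a ∈ C := by
                  by_contra haC; exact haI ((hmemI a).mpr haC)
                have hbC : b ∈ C := by
                  by_contra hbC; exact hbI ((hmemI b).mpr hbC)
                rw [if_neg haI, if_neg hbI, if_pos haC, if_pos hbC]
                have hrhs : (0:ℝ) ≤ ((ρ:ℝ) - 1) * ((if a ∈ S then (1:ℝ) else 0) * (if b ∈ S then (1:ℝ) else 0)) := by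
                  have h2 : (2:ℝ) ≤ (ρ:ℝ) := by exact_mod_cast hρ
                  have : (0:ℝ) ≤ (if a ∈ S then (1:ℝ) else 0) * (if b ∈ S then (1:ℝ) else 0) := by
                    split_ifs <;> norm_num
                  nlinarith
                nlinarith
          · rw [hyE _ he]; simp
      have hmaster := RB.masterW G w y hdc f
      have hexpand : ∑ v, f v * w v = (ρ:ℝ) * (∑ v ∈ I, w v)
          - (∑ v, (RB.freq S I col d ρ v : ℝ) * w v) - ∑ v ∈ C, w v := by
        rw [hf]
        simp only [sub_mul]
        rw [Finset.sum_sub_distrib, Finset.sum_sub_distrib]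
        congr 1
        congr 1
        · rw [show ∑ v, (if v ∈ I then (ρ:ℝ) else 0) * w v
              = ∑ v, (ρ:ℝ) * (if v ∈ I then w v else 0) from
            Finset.sum_congr rfl (fun v _ => by by_cases h : v ∈ I <;> simp [h]),
            ← Finset.mul_sum, Finset.sum_ite_mem, Finset.univ_inter]
        · rw [show ∑ v, (if v ∈ C then (1:ℝ) else 0) * w v
              = ∑ v, (if v ∈ C then w v else 0) from
            Finset.sum_congr rfl (fun v _ => by by_cases h : v ∈ C <;> simp [h]),
            Finset.sum_ite_mem, Finset.univ_inter]
      have hrhs : ∑ e : Sym2 V, y e * (((ρ:ℝ) - 1) * RB.sprod S e) = ((ρ:ℝ) - 1) * α := by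
        rw [halpha, Finset.mul_sum]
        exact Finset.sum_congr rfl fun e _ => by ring
      rw [hexpand] at hmaster
      rw [← hmaster] at hptwise
      rw [hrhs] at hptwise
      linarith
    -- Step 4 : choose a good candidate and conclude
    have hWI : ∑ v ∈ I, w v = 2 - ∑ v ∈ C, w v := by
      have h1 : ∑ v ∈ I, w v + ∑ v ∈ C, w v = ∑ v, w v := by
        rw [hI]; exact Finset.sum_sdiff (Finset.subset_univ _)
      rw [hw2] at h1; linarith
    obtain ⟨k, hkmem, hkle⟩ : ∃ k ∈ Finset.range ρ,
        (∑ v ∈ I, w v) - (∑ v ∈ RB.Ncand S I col d ρ k, w v)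
          ≤ ((∑ v ∈ C, w v) + ((ρ:ℝ) - 1) * α) / ρ := by
      apply Finset.exists_le_of_sum_le ⟨0, Finset.mem_range.mpr (by omega)⟩
      have hL : ∑ k ∈ Finset.range ρ, ((∑ v ∈ I, w v) - (∑ v ∈ RB.Ncand S I col d ρ k, w v))
          = (ρ:ℝ) * (∑ v ∈ I, w v) - ∑ v, (RB.freq S I col d ρ v : ℝ) * w v := by
        rw [Finset.sum_sub_distrib, hstep2, Finset.sum_const, Finset.card_range, nsmul_eq_mul]
      have hR : ∑ _k ∈ Finset.range ρ, (((∑ v ∈ C, w v) + ((ρ:ℝ) - 1) * α) / ρ)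
          = (∑ v ∈ C, w v) + ((ρ:ℝ) - 1) * α := by
        rw [Finset.sum_const, Finset.card_range, nsmul_eq_mul]
        field_simp
      rw [hL, hR]
      linarith
    have hfinal := hstep1 k (Finset.mem_range.mp hkmem)
    have hkey : 2 - ∑ v ∈ RB.Ncand S I col d ρ k, w v ≤ coeff * ∑ v ∈ C, w v := by
      have h2 : 2 - ∑ v ∈ RB.Ncand S I col d ρ k, w v
          = (∑ v ∈ C, w v) + ((∑ v ∈ I, w v) - ∑ v ∈ RB.Ncand S I col d ρ k, w v) := by
        rw [hWI]; ring
      rw [h2]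
      have hkey0 : (0:ℝ) ≤ ((ρ:ℝ) - 1) * α * ((∑ v ∈ C, w v) - 1) := by
        have h2ρ : (2:ℝ) ≤ (ρ:ℝ) := by exact_mod_cast hρ
        have := mul_nonneg (mul_nonneg (by linarith : (0:ℝ) ≤ (ρ:ℝ) - 1) hα0)
          (by linarith : (0:ℝ) ≤ (∑ v ∈ C, w v) - 1)
        exact this
      have h3 : (∑ v ∈ C, w v) + ((∑ v ∈ C, w v) + ((ρ:ℝ) - 1) * α) / ρ
          ≤ coeff * ∑ v ∈ C, w v := by
        have hdiff : coeff * (∑ v ∈ C, w v)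
            - ((∑ v ∈ C, w v) + ((∑ v ∈ C, w v) + ((ρ:ℝ) - 1) * α) / ρ)
            = (((ρ:ℝ) - 1) * α * ((∑ v ∈ C, w v) - 1)) / ρ := by
          rw [hcoeff]; field_simp; ring
        have hnn := div_nonneg hkey0 (le_of_lt hρR)
        linarith [hdiff, hnn]
      have h4 : (∑ v ∈ C, w v) + ((∑ v ∈ I, w v) - ∑ v ∈ RB.Ncand S I col d ρ k, w v)
          ≤ (∑ v ∈ C, w v) + ((∑ v ∈ C, w v) + ((ρ:ℝ) - 1) * α) / ρ := by
        linarith [hkle]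
      exact h4.trans h3
    linarith
  -- conclude via the infimum
  have hpos : 0 < coeff := by
    rw [hcoeff]
    have h1ρ : 0 < 1 / (ρ:ℝ) := by positivity
    nlinarith [mul_nonneg (le_of_lt h1ρ) (by linarith : (0:ℝ) ≤ 1 - α)]
  have hdiv : (∑ v ∈ S, w v + OPT (Gdel G ↑S) w) / coeff ≤ OPT G w := by
    refine RB.le_OPT G w fun C hC => ?_
    rw [div_le_iff₀ hpos]
    calc ∑ v ∈ S, w v + OPT (Gdel G ↑S) w ≤ coeff * ∑ v ∈ C, w v := main C hC
      _ = (∑ v ∈ C, w v) * coeff := mul_comm _ _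
  rw [div_le_iff₀ hpos] at hdiv
  calc ∑ v ∈ S, w v + OPT (Gdel G ↑S) w ≤ OPT G w * coeff := hdiv
    _ = coeff * OPT G w := mul_comm _ _
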